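/- Let m ≥ 1 and let k1, k2, κ, m12 be integers with 0 ≤ k2 ≤ k1 ≤ κ ≤ m12 − 2. Set n1 = m·m12 − k1, n2 = m·m12 − k2 and n' = m·m12 − κ. Then there exist a tensor T : Fin 2 → Fin n1 → Fin n2 → ℂ and matrices X1 ∈ Matrix (Fin n') (Fin n1) ℂ, X2 ∈ Matrix (Fin n') (Fin n2) ℂ such that the binary form f(x,y) = det( x • (X1 * (T 0) * X2ᵀ) + y • (X1 * (T 1) * X2ᵀ) ) admits NO factorization f = (∏_{i=1}^m ℓ_i^{m12−κ}) · g with ℓ_1, …, ℓ_m binary linear forms and g a homogeneous binary form of degree (m−1)·κ. In particular, TNS(m,m12,m; 2,n1,n2) is a proper subset of the space of all tensors Fin 2 → Fin n1 → Fin n2 → ℂ. -/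

import Mathlib

open scoped BigOperators

noncomputable section

/-- Parametrized triangle tensor network tensors. -/
def tnsSet (m01 m12 m02 n0 n1 n2 : ℕ) :
    Set (Fin n0 → Fin n1 → Fin n2 → ℂ) :=
  {T | ∃ (X0 : Fin n0 → Fin m01 × Fin m02 → ℂ)
        (X1 : Fin n1 → Fin m01 × Fin m12 → ℂ)
        (X2 : Fin n2 → Fin m12 × Fin m02 → ℂ),
      ∀ a b c, T a b c =
        ∑ i : Fin m01, ∑ j : Fin m12, ∑ k : Fin m02,
          X0 a (i, k) * X1 b (i, j) * X2 c (j, k)}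

/-- The triangle tensor network variety: Euclidean closure of the parametrized set. -/
def TNS (m01 m12 m02 n0 n1 n2 : ℕ) : Set (Fin n0 → Fin n1 → Fin n2 → ℂ) :=
  closure (tnsSet m01 m12 m02 n0 n1 n2)

/-- The vanishing ideal of a subset of an affine space over ℂ. -/
def vanishingIdeal' {ι : Type*} (Z : Set (ι → ℂ)) : Ideal (MvPolynomial ι ℂ) where
  carrier := {p | ∀ z ∈ Z, MvPolynomial.eval z p = 0}
  zero_mem' := by intro z _; simp
  add_mem' := by
    intro a b ha hb z hz
    simp [map_add, ha z hz, hb z hz]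
  smul_mem' := by
    intro c a ha z hz
    simp [smul_eq_mul, ha z hz]

/-- Affine dimension of a set of coordinate tensors. -/
def affineDim {n0 n1 n2 : ℕ} (Z : Set (Fin n0 → Fin n1 → Fin n2 → ℂ)) : WithBot ℕ∞ :=
  ringKrullDim (MvPolynomial (Fin n0 × Fin n1 × Fin n2) ℂ ⧸
    vanishingIdeal' ((fun T (p : Fin n0 × Fin n1 × Fin n2) => T p.1 p.2.1 p.2.2) '' Z))


/-- The binary form `det(x · X1 (T 0) X2ᵀ + y · X1 (T 1) X2ᵀ)`. -/
def pencilDet {n n1 n2 : ℕ} (T : Fin 2 → Fin n1 → Fin n2 → ℂ)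
    (X1 : Matrix (Fin n) (Fin n1) ℂ) (X2 : Matrix (Fin n) (Fin n2) ℂ) :
    MvPolynomial (Fin 2) ℂ :=
  Matrix.det (Matrix.of fun u v : Fin n =>
    MvPolynomial.X 0 * MvPolynomial.C ((X1 * Matrix.of (T 0) * X2.transpose) u v)
      + MvPolynomial.X 1 * MvPolynomial.C ((X1 * Matrix.of (T 1) * X2.transpose) u v))

section Helpers
open MvPolynomial Matrix

def myT (n1 n2 : ℕ) : Fin 2 → Fin n1 → Fin n2 → ℂ :=
  fun a b c => if (b:ℕ) = (c:ℕ) then (if a = 0 then 1 else ((b:ℕ):ℂ)) else 0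

def projM (n' n : ℕ) : Matrix (Fin n') (Fin n) ℂ :=
  Matrix.of fun u b => if (u:ℕ) = (b:ℕ) then 1 else 0

lemma onehot_mul_sum {n n' : ℕ} (h : n' ≤ n) (u : Fin n') (g : Fin n → ℂ) :
    ∑ b : Fin n, (if (u:ℕ) = (b:ℕ) then (1:ℂ) else 0) * g b = g (Fin.castLE h u) := by
  rw [Finset.sum_eq_single (Fin.castLE h u)]
  · simp
  · intro b _ hb
    rw [if_neg, zero_mul]
    intro hc
    exact hb (Fin.ext (by simpa using hc.symm))
  · simp

lemma compress_apply {n' n1 n2 : ℕ} (h1 : n' ≤ n1) (h2 : n' ≤ n2)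
    (M : Matrix (Fin n1) (Fin n2) ℂ) (u v : Fin n') :
    (projM n' n1 * M * (projM n' n2)ᵀ) u v = M (Fin.castLE h1 u) (Fin.castLE h2 v) := by
  rw [Matrix.mul_apply]
  have : ∀ c : Fin n2, (projM n' n1 * M) u c * (projM n' n2)ᵀ c v
      = (if (v:ℕ) = (c:ℕ) then (1:ℂ) else 0) * (projM n' n1 * M) u c := by
    intro c; rw [mul_comm]; rfl
  simp_rw [this]
  rw [onehot_mul_sum h2 v (fun c => (projM n' n1 * M) u c), Matrix.mul_apply]
  exact onehot_mul_sum h1 u _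

lemma pencil_myT (n' n1 n2 : ℕ) (h1 : n' ≤ n1) (h2 : n' ≤ n2) :
    pencilDet (myT n1 n2) (projM n' n1) (projM n' n2)
      = ∏ u : Fin n', (X (0:Fin 2) + C ((u:ℕ):ℂ) * X 1) := by
  unfold pencilDet
  have hmat : (Matrix.of fun u v : Fin n' =>
      X (0:Fin 2) * C ((projM n' n1 * Matrix.of (myT n1 n2 0) * (projM n' n2)ᵀ) u v)
        + X 1 * C ((projM n' n1 * Matrix.of (myT n1 n2 1) * (projM n' n2)ᵀ) u v))
      = Matrix.diagonal (fun u : Fin n' => X (0:Fin 2) + C ((u:ℕ):ℂ) * X 1) := by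
    ext u v : 2
    rw [Matrix.of_apply, compress_apply h1 h2, compress_apply h1 h2]
    by_cases huv : u = v
    · subst huv
      have e0 : Matrix.of (myT n1 n2 0) (Fin.castLE h1 u) (Fin.castLE h2 u) = 1 := by
        simp [myT]
      have e1 : Matrix.of (myT n1 n2 1) (Fin.castLE h1 u) (Fin.castLE h2 u) = ((u:ℕ):ℂ) := by
        simp [myT]
      rw [e0, e1, Matrix.diagonal_apply_eq, MvPolynomial.C_1, mul_one]
      ring
    · have hne : ¬ ((Fin.castLE h1 u : ℕ)) = ((Fin.castLE h2 v : ℕ)) := by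
        simpa using fun hc => huv (Fin.ext hc)
      simp [myT, Matrix.diagonal, huv, hne, Fin.val_inj]
  rw [hmat, Matrix.det_diagonal]

lemma no_factorization {n' mm e : ℕ} (hm : 0 < mm) (he : 2 ≤ e)
    (ℓ : Fin mm → MvPolynomial (Fin 2) ℂ) (g : MvPolynomial (Fin 2) ℂ)
    (hℓ : ∀ i, ∃ a b : ℂ, ℓ i = C a * X 0 + C b * X 1)
    (heq : ∏ u : Fin n', (X (0:Fin 2) + C ((u:ℕ):ℂ) * X 1) = (∏ i : Fin mm, ℓ i ^ e) * g) :
    False := by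
  obtain ⟨a, b, hab⟩ := hℓ ⟨0, hm⟩
  have hdvd : (C a * X 0 + C b * X 1) ^ e ∣ ∏ u : Fin n', (X (0:Fin 2) + C ((u:ℕ):ℂ) * X 1) := by
    rw [heq, ← hab]
    exact Dvd.dvd.mul_right (Finset.dvd_prod_of_mem (fun i => ℓ i ^ e) (Finset.mem_univ _)) g
  by_cases ha : a = 0
  · -- evaluate at the point (1, 0)
    have hz := _root_.map_dvd (MvPolynomial.eval (![1, 0] : Fin 2 → ℂ)) hdvd
    have e1 : MvPolynomial.eval (![1, 0] : Fin 2 → ℂ) ((C a * X 0 + C b * X 1) ^ e) = 0 := by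
      subst ha
      rw [map_pow]
      simp [zero_pow (show e ≠ 0 by omega)]
    have e2 : MvPolynomial.eval (![1, 0] : Fin 2 → ℂ)
        (∏ u : Fin n', (X (0:Fin 2) + C ((u:ℕ):ℂ) * X 1)) = 1 := by
      rw [map_prod]
      simp
    rw [e1, e2] at hz
    simpa using hz
  · -- dehomogenize at y = 1
    set φ : MvPolynomial (Fin 2) ℂ →ₐ[ℂ] Polynomial ℂ :=
      MvPolynomial.aeval (![Polynomial.X, 1] : Fin 2 → Polynomial ℂ) with hφ
    have h2 := _root_.map_dvd φ hdvd
    have hL : φ (∏ u : Fin n', (X (0:Fin 2) + C ((u:ℕ):ℂ) * X 1))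
        = ∏ u : Fin n', (Polynomial.X - Polynomial.C (-((u:ℕ):ℂ))) := by
      rw [map_prod]
      refine Finset.prod_congr rfl fun u _ => ?_
      rw [Polynomial.C_neg, sub_neg_eq_add]
      simp [hφ]
    have hsep : (∏ u : Fin n', (Polynomial.X - Polynomial.C (-((u:ℕ):ℂ)))).Separable := by
      refine Polynomial.separable_prod_X_sub_C_iff.mpr ?_
      intro u v huv
      have : ((u:ℕ):ℂ) = ((v:ℕ):ℂ) := by
        have := neg_injective huv
        exact this
      exact Fin.ext (Nat.cast_injective this)
    have hsq := hsep.squarefree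
    have hφℓ : φ ((C a * X 0 + C b * X 1) ^ e)
        = (Polynomial.C a * Polynomial.X + Polynomial.C b) ^ e := by
      simp [hφ]
    rw [hφℓ, hL] at h2
    have hfac : Polynomial.C a * Polynomial.X + Polynomial.C b
        = Polynomial.C a * (Polynomial.X - Polynomial.C (-(b/a))) := by
      rw [mul_sub, ← Polynomial.C_mul, mul_neg, Polynomial.C_neg, sub_neg_eq_add, mul_div_cancel₀ b ha]
    have hdvd2 : (Polynomial.X - Polynomial.C (-(b/a))) * (Polynomial.X - Polynomial.C (-(b/a)))
        ∣ ∏ u : Fin n', (Polynomial.X - Polynomial.C (-((u:ℕ):ℂ))) := by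
      have s1 : (Polynomial.X - Polynomial.C (-(b/a))) * (Polynomial.X - Polynomial.C (-(b/a)))
          ∣ (Polynomial.X - Polynomial.C (-(b/a))) ^ e := by
        rw [← pow_two]
        exact pow_dvd_pow _ he
      have s2 : (Polynomial.X - Polynomial.C (-(b/a))) ^ e
          ∣ (Polynomial.C a * Polynomial.X + Polynomial.C b) ^ e := by
        rw [hfac]
        exact pow_dvd_pow_of_dvd (dvd_mul_left _ _) e
      exact s1.trans (s2.trans h2)
    exact Polynomial.not_isUnit_X_sub_C _ (hsq _ hdvd2)
lemma exists_pencil_kernel {mm : ℕ} (hm : 0 < mm) (L0 L1 : Matrix (Fin mm) (Fin mm) ℂ) :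
    ∃ x y : ℂ, ¬(x = 0 ∧ y = 0) ∧ ∃ v : Fin mm → ℂ, v ≠ 0 ∧ (x • L0 + y • L1).mulVec v = 0 := by
  by_cases h : ∃ v ≠ 0, L1.mulVec v = (0 : Fin mm → ℂ)
  · obtain ⟨v, hv, hvz⟩ := h
    refine ⟨0, 1, by simp, v, hv, ?_⟩
    simp [Matrix.add_mulVec, Matrix.smul_mulVec, hvz]
  · have hdet : L1.det ≠ 0 := fun hd => h (Matrix.exists_mulVec_eq_zero_iff.mpr hd)
    haveI : Nontrivial (Fin mm → ℂ) := by
      have : Nonempty (Fin mm) := ⟨⟨0, hm⟩⟩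
      infer_instance
    obtain ⟨μ, hμ⟩ := Module.End.exists_eigenvalue (Matrix.mulVecLin (L1⁻¹ * L0))
    obtain ⟨v, hv⟩ := hμ.exists_hasEigenvector
    refine ⟨1, -μ, by simp, v, hv.right, ?_⟩
    have h1 : (L1⁻¹ * L0).mulVec v = μ • v := by
      have := hv.apply_eq_smul
      simpa [Matrix.mulVecLin_apply] using this
    have h2 : L0.mulVec v = L1.mulVec (μ • v) := by
      calc L0.mulVec v = (L1 * (L1⁻¹ * L0)).mulVec v := by
            rw [← Matrix.mul_assoc, Matrix.mul_nonsing_inv _ (isUnit_iff_ne_zero.mpr hdet),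
              Matrix.one_mul]
        _ = L1.mulVec ((L1⁻¹ * L0).mulVec v) := by rw [← Matrix.mulVec_mulVec]
        _ = L1.mulVec (μ • v) := by rw [h1]
    rw [Matrix.add_mulVec, Matrix.smul_mulVec, Matrix.smul_mulVec, one_smul, h2,
      Matrix.mulVec_smul]
    simp

lemma rank_N_le {mm m12 : ℕ} (Lxy : Matrix (Fin mm) (Fin mm) ℂ)
    (v : Fin mm → ℂ) (hv : v ≠ 0) (hker : Lxy.mulVec v = 0) :
    (Matrix.of fun (p : Fin mm × Fin m12) (q : Fin m12 × Fin mm) =>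
      if p.2 = q.1 then Lxy p.1 q.2 else 0).rank + m12 ≤ mm * m12 := by
  set N : Matrix (Fin mm × Fin m12) (Fin m12 × Fin mm) ℂ :=
    Matrix.of fun p q => if p.2 = q.1 then Lxy p.1 q.2 else 0 with hN
  set w : Fin m12 → (Fin m12 × Fin mm → ℂ) := fun j q => if q.1 = j then v q.2 else 0 with hw
  have hwker : ∀ j, N.mulVec (w j) = 0 := by
    intro j
    funext p
    show ∑ q : Fin m12 × Fin mm, N p q * w j q = 0
    rw [Fintype.sum_prod_type]
    rw [Finset.sum_eq_single j]
    · by_cases hpj : p.2 = j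
      · have h3 : ∑ k : Fin mm, N p (j, k) * w j (j, k) = ∑ k : Fin mm, Lxy p.1 k * v k := by
          refine Finset.sum_congr rfl fun k _ => ?_
          simp [hN, hw, hpj]
        rw [h3]
        have h4 := congrFun hker p.1
        simpa [Matrix.mulVec, dotProduct] using h4
      · refine Finset.sum_eq_zero fun k _ => ?_
        simp [hN, hw, hpj]
    · intro j' _ hj'
      refine Finset.sum_eq_zero fun k _ => ?_
      simp [hw, hj']
    · simp
  have hwind : LinearIndependent ℂ w := by
    rw [Fintype.linearIndependent_iff]
    intro g hg j
    obtain ⟨k0, hk0⟩ := Function.ne_iff.mp hv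
    simp only [Pi.zero_apply] at hk0
    have h5 := congrFun hg (j, k0)
    simp only [Finset.sum_apply, Pi.smul_apply, smul_eq_mul, Pi.zero_apply] at h5
    rw [Finset.sum_eq_single j] at h5
    · simp only [hw, if_pos rfl] at h5
      exact (mul_eq_zero.mp h5).resolve_right hk0
    · intro j' _ hj'
      have hcond : ¬(((j, k0) : Fin m12 × Fin mm).1 = j') := fun hc => hj' hc.symm
      simp [hw, hcond]
    · simp
  have hmem : ∀ j, w j ∈ LinearMap.ker N.mulVecLin := by
    intro j
    rw [LinearMap.mem_ker, Matrix.mulVecLin_apply, hwker]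
  set w' : Fin m12 → ↥(LinearMap.ker N.mulVecLin) := fun j => ⟨w j, hmem j⟩ with hw'
  have hwind' : LinearIndependent ℂ w' := by
    have hcomp : w = (LinearMap.ker N.mulVecLin).subtype ∘ w' := rfl
    rw [hcomp] at hwind
    exact LinearIndependent.of_comp _ hwind
  have hker_ge : m12 ≤ Module.finrank ℂ ↥(LinearMap.ker N.mulVecLin) := by
    simpa using hwind'.fintype_card_le_finrank
  have hrn := LinearMap.finrank_range_add_finrank_ker N.mulVecLin
  have hdom : Module.finrank ℂ (Fin m12 × Fin mm → ℂ) = m12 * mm := by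
    simp [Module.finrank_pi]
  rw [hdom] at hrn
  have hrank : N.rank = Module.finrank ℂ ↥(LinearMap.range N.mulVecLin) := rfl
  rw [← hrank] at hrn
  have hcomm : m12 * mm = mm * m12 := Nat.mul_comm _ _
  omega

def badSet (s n1 n2 : ℕ) : Set (Fin 2 → Fin n1 → Fin n2 → ℂ) :=
  {T | ∃ p : ℂ × ℂ, ‖p‖ = 1 ∧ ∀ (ri : Fin s → Fin n1) (ci : Fin s → Fin n2),
      (Matrix.of fun u v => p.1 * T 0 (ri u) (ci v) + p.2 * T 1 (ri u) (ci v)).det = 0}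

lemma isClosed_badSet (s n1 n2 : ℕ) : IsClosed (badSet s n1 n2) := by
  have himg : badSet s n1 n2 = Prod.snd ''
      {q : (Metric.sphere (0:ℂ × ℂ) 1) × (Fin 2 → Fin n1 → Fin n2 → ℂ) |
        ∀ (ri : Fin s → Fin n1) (ci : Fin s → Fin n2),
          (Matrix.of fun u v => ((q.1 : ℂ × ℂ)).1 * q.2 0 (ri u) (ci v)
            + ((q.1 : ℂ × ℂ)).2 * q.2 1 (ri u) (ci v)).det = 0} := by
    ext T
    constructor
    · rintro ⟨p, hp, h⟩
      exact ⟨⟨⟨p, by simpa [mem_sphere_zero_iff_norm] using hp⟩, T⟩, h, rfl⟩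
    · rintro ⟨⟨⟨p, hp⟩, T'⟩, h, rfl⟩
      exact ⟨p, by simpa [mem_sphere_zero_iff_norm] using hp, h⟩
  rw [himg]
  apply isClosedMap_snd_of_compactSpace
  have hset : {q : (Metric.sphere (0:ℂ × ℂ) 1) × (Fin 2 → Fin n1 → Fin n2 → ℂ) |
        ∀ (ri : Fin s → Fin n1) (ci : Fin s → Fin n2),
          (Matrix.of fun u v => ((q.1 : ℂ × ℂ)).1 * q.2 0 (ri u) (ci v)
            + ((q.1 : ℂ × ℂ)).2 * q.2 1 (ri u) (ci v)).det = 0}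
      = ⋂ (ri : Fin s → Fin n1), ⋂ (ci : Fin s → Fin n2),
        {q : (Metric.sphere (0:ℂ × ℂ) 1) × (Fin 2 → Fin n1 → Fin n2 → ℂ) |
          (Matrix.of fun u v => ((q.1 : ℂ × ℂ)).1 * q.2 0 (ri u) (ci v)
            + ((q.1 : ℂ × ℂ)).2 * q.2 1 (ri u) (ci v)).det = 0} := by
    ext q; simp [Set.mem_iInter]
  rw [hset]
  refine isClosed_iInter fun ri => isClosed_iInter fun ci => ?_
  refine isClosed_eq ?_ continuous_const
  refine Continuous.matrix_det ?_
  refine continuous_matrix fun u v => ?_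
  have h1 : Continuous fun q : (Metric.sphere (0:ℂ × ℂ) 1) × (Fin 2 → Fin n1 → Fin n2 → ℂ) =>
      ((q.1 : ℂ × ℂ)).1 := (continuous_fst.comp (continuous_subtype_val.comp continuous_fst))
  have h2 : Continuous fun q : (Metric.sphere (0:ℂ × ℂ) 1) × (Fin 2 → Fin n1 → Fin n2 → ℂ) =>
      ((q.1 : ℂ × ℂ)).2 := (continuous_snd.comp (continuous_subtype_val.comp continuous_fst))
  have h3 : Continuous fun q : (Metric.sphere (0:ℂ × ℂ) 1) × (Fin 2 → Fin n1 → Fin n2 → ℂ) =>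
      q.2 0 (ri u) (ci v) :=
    ((continuous_apply (ci v)).comp ((continuous_apply (ri u)).comp
      ((continuous_apply (0 : Fin 2)).comp continuous_snd)))
  have h4 : Continuous fun q : (Metric.sphere (0:ℂ × ℂ) 1) × (Fin 2 → Fin n1 → Fin n2 → ℂ) =>
      q.2 1 (ri u) (ci v) :=
    ((continuous_apply (ci v)).comp ((continuous_apply (ri u)).comp
      ((continuous_apply (1 : Fin 2)).comp continuous_snd)))
  exact (h1.mul h3).add (h2.mul h4)

lemma middle_sum {m m12 : ℕ} (E : Fin m → Fin m → ℂ) (r : Fin m × Fin m12 → ℂ)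
    (c : Fin m12 × Fin m → ℂ) :
    ∑ jk : Fin m12 × Fin m,
        (∑ ij : Fin m × Fin m12, r ij * (if ij.2 = jk.1 then E ij.1 jk.2 else 0)) * c jk
    = ∑ i : Fin m, ∑ j : Fin m12, ∑ k : Fin m, E i k * r (i, j) * c (j, k) := by
  rw [Fintype.sum_prod_type]
  simp_rw [Fintype.sum_prod_type, mul_ite, mul_zero, Finset.sum_ite_eq' Finset.univ,
    Finset.mem_univ, if_true, Finset.sum_mul]
  -- now LHS : ∑ j, ∑ k, ∑ i, r (i, j) * E i k * c (j, k)
  conv_rhs => rw [Finset.sum_comm]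
  refine Finset.sum_congr rfl fun j _ => ?_
  rw [Finset.sum_comm]
  refine Finset.sum_congr rfl fun i _ => ?_
  refine Finset.sum_congr rfl fun k _ => ?_
  ring


lemma compressed_factor {m m12 s n1 n2 : ℕ}
    (X0 : Fin 2 → Fin m × Fin m → ℂ) (X1p : Fin n1 → Fin m × Fin m12 → ℂ)
    (X2p : Fin n2 → Fin m12 × Fin m → ℂ) (T : Fin 2 → Fin n1 → Fin n2 → ℂ)
    (hT : ∀ a b c, T a b c = ∑ i : Fin m, ∑ j : Fin m12, ∑ k : Fin m,
      X0 a (i, k) * X1p b (i, j) * X2p c (j, k))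
    (p1 p2 : ℂ) (ri : Fin s → Fin n1) (ci : Fin s → Fin n2) :
    (Matrix.of fun u w => p1 * T 0 (ri u) (ci w) + p2 * T 1 (ri u) (ci w))
      = (Matrix.of fun u ij => X1p (ri u) ij)
        * (Matrix.of fun (p : Fin m × Fin m12) (q : Fin m12 × Fin m) =>
            if p.2 = q.1 then p1 * X0 0 (p.1, q.2) + p2 * X0 1 (p.1, q.2) else 0)
        * (Matrix.of fun (jk : Fin m12 × Fin m) w => X2p (ci w) jk) := by
  ext u w
  rw [Matrix.of_apply, Matrix.mul_apply]
  simp_rw [Matrix.mul_apply, Matrix.of_apply]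
  rw [middle_sum (fun i k => p1 * X0 0 (i, k) + p2 * X0 1 (i, k))
    (fun ij => X1p (ri u) ij) (fun jk => X2p (ci w) jk)]
  rw [hT, hT]
  simp_rw [Finset.mul_sum, ← Finset.sum_add_distrib]
  refine Finset.sum_congr rfl fun i _ => Finset.sum_congr rfl fun j _ =>
    Finset.sum_congr rfl fun k _ => ?_
  ring

lemma tns_subset_badSet {m m12 n1 n2 : ℕ} (hm : 0 < m) :
    tnsSet m m12 m 2 n1 n2 ⊆ badSet ((m-1)*m12+1) n1 n2 := by
  rintro T ⟨X0, X1p, X2p, hT⟩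
  set L0 : Matrix (Fin m) (Fin m) ℂ := Matrix.of fun i k => X0 0 (i, k) with hL0
  set L1 : Matrix (Fin m) (Fin m) ℂ := Matrix.of fun i k => X0 1 (i, k) with hL1
  obtain ⟨x, y, hxy, v, hv, hker⟩ := exists_pencil_kernel hm L0 L1
  have hxyne : ((x, y) : ℂ × ℂ) ≠ 0 := by
    intro h
    exact hxy ⟨congrArg Prod.fst h, congrArg Prod.snd h⟩
  set nv : ℝ := ‖((x, y) : ℂ × ℂ)‖ with hnvdef
  have hnv : nv ≠ 0 := norm_ne_zero_iff.mpr hxyne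
  set a : ℂ := ((nv : ℂ))⁻¹ with ha
  have hane : a ≠ 0 := by
    simp [ha, hnv]
  refine ⟨(a * x, a * y), ?_, ?_⟩
  · have hsm : ((a * x, a * y) : ℂ × ℂ) = a • ((x, y) : ℂ × ℂ) := rfl
    rw [hsm, norm_smul, ha]
    rw [norm_inv, Complex.norm_real, Real.norm_eq_abs, abs_of_nonneg (norm_nonneg _)]
    exact inv_mul_cancel₀ hnv
  · intro ri ci
    have hker' : ((a * x) • L0 + (a * y) • L1).mulVec v = 0 := by
      have hcomb : (a * x) • L0 + (a * y) • L1 = a • (x • L0 + y • L1) := by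
        rw [smul_add, smul_smul, smul_smul]
      rw [hcomb, Matrix.smul_mulVec, hker, smul_zero]
    set Lxy : Matrix (Fin m) (Fin m) ℂ :=
      Matrix.of fun i k => (a * x) * X0 0 (i, k) + (a * y) * X0 1 (i, k) with hLxy
    have hLeq : Lxy = (a * x) • L0 + (a * y) • L1 := by
      ext i k
      simp [hLxy, hL0, hL1]
    have hkerL : Lxy.mulVec v = 0 := by rw [hLeq]; exact hker'
    have hfact := compressed_factor X0 X1p X2p T hT (a * x) (a * y) ri ci
    show (Matrix.of fun u w => (a * x) * T 0 (ri u) (ci w) + (a * y) * T 1 (ri u) (ci w)).det = 0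
    rw [hfact]
    by_contra hdet
    have hunit : IsUnit ((Matrix.of fun u ij => X1p (ri u) ij)
        * (Matrix.of fun (p : Fin m × Fin m12) (q : Fin m12 × Fin m) =>
            if p.2 = q.1 then (a * x) * X0 0 (p.1, q.2) + (a * y) * X0 1 (p.1, q.2) else 0)
        * (Matrix.of fun (jk : Fin m12 × Fin m) w => X2p (ci w) jk)) := by
      exact (Matrix.isUnit_iff_isUnit_det _).mpr (isUnit_iff_ne_zero.mpr hdet)
    have hr1 := Matrix.rank_of_isUnit _ hunit
    rw [Fintype.card_fin] at hr1
    have hr2 : ((Matrix.of fun u ij => X1p (ri u) ij)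
        * (Matrix.of fun (p : Fin m × Fin m12) (q : Fin m12 × Fin m) =>
            if p.2 = q.1 then (a * x) * X0 0 (p.1, q.2) + (a * y) * X0 1 (p.1, q.2) else 0)
        * (Matrix.of fun (jk : Fin m12 × Fin m) w => X2p (ci w) jk)).rank
        ≤ (Matrix.of fun (p : Fin m × Fin m12) (q : Fin m12 × Fin m) =>
            if p.2 = q.1 then (a * x) * X0 0 (p.1, q.2) + (a * y) * X0 1 (p.1, q.2) else 0).rank :=
      le_trans (Matrix.rank_mul_le_left _ _) (Matrix.rank_mul_le_right _ _)
    have hr3 : (Matrix.of fun (p : Fin m × Fin m12) (q : Fin m12 × Fin m) =>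
            if p.2 = q.1 then (a * x) * X0 0 (p.1, q.2) + (a * y) * X0 1 (p.1, q.2) else 0).rank + m12
        ≤ m * m12 := by
      have hh := rank_N_le (m12 := m12) Lxy v hv hkerL
      convert hh using 3
      rfl
    have hsub : (m - 1) * m12 + m12 = m * m12 := by
      have h1 : (m - 1 + 1) * m12 = m * m12 := by rw [Nat.sub_add_cancel hm]
      rw [add_mul, one_mul] at h1
      exact h1
    omega

lemma myT_not_bad {s n1 n2 : ℕ} (hs1 : s + 1 ≤ n1) (h12 : n1 ≤ n2) :
    myT n1 n2 ∉ badSet s n1 n2 := by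
  rintro ⟨⟨x, y⟩, hp, hdet⟩
  have hxy : ¬(x = 0 ∧ y = 0) := by
    rintro ⟨rfl, rfl⟩
    have h0 : ((0:ℂ), (0:ℂ)) = (0 : ℂ × ℂ) := rfl
    rw [h0, norm_zero] at hp
    exact one_ne_zero hp.symm
  have hex : ∃ f : Fin s → ℕ, (∀ i, f i < n1) ∧ (∀ i j, f i = f j → i = j) ∧
      (∀ i, x + y * (f i : ℂ) ≠ 0) := by
    by_cases hbad : ∃ c : ℕ, x + y * (c : ℂ) = 0
    · obtain ⟨c0, hc0⟩ := hbad
      have hy : y ≠ 0 := by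
        intro h0
        rw [h0] at hc0
        exact hxy ⟨by simpa using hc0, h0⟩
      refine ⟨fun i => if (i:ℕ) < c0 then (i:ℕ) else (i:ℕ)+1, ?_, ?_, ?_⟩
      · intro i
        have := i.isLt
        dsimp only
        split_ifs <;> omega
      · intro i j hij
        apply Fin.ext
        simp only at hij
        have hi := i.isLt
        have hj := j.isLt
        revert hij
        split_ifs <;> omega
      · intro i hzero
        simp only at hzero
        have hfne : (if (i:ℕ) < c0 then (i:ℕ) else (i:ℕ)+1) ≠ c0 := by split_ifs <;> omega
        have hcast : (((if (i:ℕ) < c0 then (i:ℕ) else (i:ℕ)+1) : ℕ) : ℂ) = ((c0:ℕ) : ℂ) := by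
          have h1 : y * ((((if (i:ℕ) < c0 then (i:ℕ) else (i:ℕ)+1) : ℕ) : ℂ) - ((c0:ℕ):ℂ)) = 0 := by
            linear_combination hzero - hc0
          rcases mul_eq_zero.mp h1 with h | h
          · exact absurd h hy
          · exact sub_eq_zero.mp h
        exact hfne (Nat.cast_injective hcast)
    · push_neg at hbad
      exact ⟨fun i => (i:ℕ), fun i => lt_of_lt_of_le i.isLt (by omega),
        fun i j h => Fin.ext h, fun i => hbad _⟩
  obtain ⟨f, hflt, hfinj, hfne⟩ := hex
  set ri : Fin s → Fin n1 := fun u => ⟨f u, hflt u⟩ with hri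
  set ci : Fin s → Fin n2 := fun v => ⟨f v, lt_of_lt_of_le (hflt v) h12⟩ with hci
  have hD : (Matrix.of fun u v => x * myT n1 n2 0 (ri u) (ci v)
      + y * myT n1 n2 1 (ri u) (ci v)).det = 0 := hdet ri ci
  have hdiag : (Matrix.of fun u v => x * myT n1 n2 0 (ri u) (ci v)
      + y * myT n1 n2 1 (ri u) (ci v))
      = Matrix.diagonal (fun u => x + y * (f u : ℂ)) := by
    ext u v
    by_cases huv : u = v
    · subst huv
      simp [myT, hri, hci, Matrix.diagonal]
    · have hne : f u ≠ f v := fun hc => huv (hfinj _ _ hc)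
      simp [myT, hri, hci, Matrix.diagonal, huv, hne]
  rw [hdiag, Matrix.det_diagonal] at hD
  obtain ⟨u, _, hu⟩ := Finset.prod_eq_zero_iff.mp hD
  exact hfne u hu

end Helpers

/-- The coincident-root-locus equations are nontrivial: there is a tensor and a choice
of restriction matrices for which the binary determinant form admits no factorization
of coincident-root type `((m12−κ)^m, 1^{(m−1)κ})`; in particular the triangle tensor
network variety is a proper subset of the ambient space. -/

theorem tns_coincident_root_locus_nontrivial (m m12 k1 k2 κ n1 n2 n' : ℕ) (hm : 1 ≤ m)
    (hk21 : k2 ≤ k1) (hk1κ : k1 ≤ κ) (hκ : κ + 2 ≤ m12)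
    (hn1 : n1 + k1 = m * m12) (hn2 : n2 + k2 = m * m12) (hn' : n' + κ = m * m12) :
    (∃ (T : Fin 2 → Fin n1 → Fin n2 → ℂ)
        (X1 : Matrix (Fin n') (Fin n1) ℂ) (X2 : Matrix (Fin n') (Fin n2) ℂ),
      ¬ ∃ (ℓ : Fin m → MvPolynomial (Fin 2) ℂ) (g : MvPolynomial (Fin 2) ℂ),
        (∀ i, ∃ a b : ℂ,
          ℓ i = MvPolynomial.C a * MvPolynomial.X 0 + MvPolynomial.C b * MvPolynomial.X 1) ∧
        g.IsHomogeneous ((m - 1) * κ) ∧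
        pencilDet T X1 X2 = (∏ i : Fin m, (ℓ i) ^ (m12 - κ)) * g) ∧
    TNS m m12 m 2 n1 n2 ≠ Set.univ := by
  have h1n : n' ≤ n1 := by omega
  have h2n : n' ≤ n2 := by omega
  have h12 : n1 ≤ n2 := by omega
  have hsub : (m - 1) * m12 + m12 = m * m12 := by
    have h1 : (m - 1 + 1) * m12 = m * m12 := by rw [Nat.sub_add_cancel hm]
    rw [add_mul, one_mul] at h1
    exact h1
  constructor
  · refine ⟨myT n1 n2, projM n' n1, projM n' n2, ?_⟩
    rintro ⟨ℓ, g, hℓ, hg, heqn⟩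
    rw [pencil_myT n' n1 n2 h1n h2n] at heqn
    exact no_factorization hm (show 2 ≤ m12 - κ by omega) ℓ g hℓ heqn
  · intro huniv
    have hmem : myT n1 n2 ∈ TNS m m12 m 2 n1 n2 := by rw [huniv]; trivial
    have hsubcl : TNS m m12 m 2 n1 n2 ⊆ badSet ((m-1)*m12+1) n1 n2 :=
      closure_minimal (tns_subset_badSet hm) (isClosed_badSet _ _ _)
    have hs1 : (m-1)*m12 + 1 + 1 ≤ n1 := by omega
    exact myT_not_bad hs1 h12 (hsubcl hmem)
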